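/- Suppose for each unit vector u and each t > 0 the map b ↦ F^u_b(t) := P(τ_{Π⁺(u,b)} ≤ t) is non-increasing in b and strictly decreasing on U^u_t = {b : F^u_b(t) ∈ (0,1)}. Let t_r > 0 and suppose C(u) satisfies E[τ_{Π⁺(u,C(u))}] = t_r with τ_{Π⁺(u,C(u))} non-deterministic (P(τ_{Π⁺(u,C(u))} = t_r) < 1). If b > C(u) satisfies E[τ_{Π⁺(u,b)}] = t_r as well, then a contradiction follows; i.e., b ↦ E[τ_{Π⁺(u,b)}] takes the value t_r at most at the single point C(u). -/

import Mathlib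

open scoped ENNReal NNReal RealInnerProductSpace
open MeasureTheory

/-- First hitting time of a set `A` by the path `t ↦ V t ω`, with `inf ∅ = ∞`. -/
noncomputable def hittingTime {d : ℕ} {Ω : Type*}
    (V : ℝ≥0 → Ω → EuclideanSpace ℝ (Fin d))
    (A : Set (EuclideanSpace ℝ (Fin d))) (ω : Ω) : ℝ≥0∞ :=
  ⨅ (t : ℝ≥0) (_ : V t ω ∈ A), (t : ℝ≥0∞)

/-- The half-space `Π⁺(u, c) = {v : ⟨u, v⟩ ≥ c}`. -/
def piPlus {d : ℕ} (u : EuclideanSpace ℝ (Fin d)) (c : ℝ) :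
    Set (EuclideanSpace ℝ (Fin d)) := {v | c ≤ ⟪u, v⟫}

/-- The support function `B(𝓑, u) = sup {⟨u, v⟩ : v ∈ 𝓑}`. -/
noncomputable def suppFn {d : ℕ} (B : Set (EuclideanSpace ℝ (Fin d)))
    (u : EuclideanSpace ℝ (Fin d)) : ℝ :=
  sSup ((fun v => ⟪u, v⟫) '' B)

/-- Layer cake for an `ℝ≥0∞`-valued random variable with finite mean. -/
lemma layercake_tail {Ω : Type*} [MeasurableSpace Ω] (P : Measure Ω)
    [IsProbabilityMeasure P] (τ : Ω → ℝ≥0∞) (hτ : Measurable τ)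
    {r : ℝ} (hint : ∫⁻ ω, τ ω ∂P = ENNReal.ofReal r) :
    ∫⁻ t in Set.Ioi (0 : ℝ), P {ω | ENNReal.ofReal t < τ ω} = ENNReal.ofReal r := by
  have hfin : ∀ᵐ ω ∂P, τ ω < ⊤ :=
    ae_lt_top hτ (by rw [hint]; exact ENNReal.ofReal_ne_top)
  have h1 : ∫⁻ ω, ENNReal.ofReal ((τ ω).toReal) ∂P = ENNReal.ofReal r := by
    rw [← hint]
    apply lintegral_congr_ae
    filter_upwards [hfin] with ω h
    rw [ENNReal.ofReal_toReal h.ne]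
  have h2 := lintegral_eq_lintegral_meas_lt P (f := fun ω => (τ ω).toReal)
    (Filter.Eventually.of_forall fun ω => ENNReal.toReal_nonneg)
    (hτ.ennreal_toReal.aemeasurable)
  rw [h2] at h1
  rw [← h1]
  apply lintegral_congr_ae
  filter_upwards [ae_restrict_mem measurableSet_Ioi] with t ht
  apply measure_congr
  rw [Filter.eventuallyEq_set]
  filter_upwards [hfin] with ω hω
  show ENNReal.ofReal t < τ ω ↔ t < (τ ω).toReal
  exact ENNReal.ofReal_lt_iff_lt_toReal (le_of_lt ht) hω.ne

/-- If the CDF of `τ` takes only the values 0 and 1 a.e., and `E τ = t_r`, then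
`τ = t_r` almost surely. -/
lemma aux_det {Ω : Type*} [MeasurableSpace Ω] (P : Measure Ω)
    [IsProbabilityMeasure P] (τ : Ω → ℝ≥0∞) (hτ : Measurable τ)
    (tr : ℝ) (htr : 0 < tr) (hint : ∫⁻ ω, τ ω ∂P = ENNReal.ofReal tr)
    (hkey : ∀ᵐ t ∂(volume.restrict (Set.Ioi (0 : ℝ))),
      P {ω | τ ω ≤ ENNReal.ofReal t} = 0 ∨ P {ω | τ ω ≤ ENNReal.ofReal t} = 1) :
    P {ω | τ ω = ENNReal.ofReal tr} = 1 := by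
  have hFms : ∀ x : ℝ≥0∞, MeasurableSet {ω | τ ω ≤ x} := fun x => hτ measurableSet_Iic
  have hGF : ∀ x : ℝ≥0∞, P {ω | x < τ ω} = 1 - P {ω | τ ω ≤ x} := by
    intro x
    have e : {ω | x < τ ω} = {ω | τ ω ≤ x}ᶜ := by ext ω; simp [not_le]
    rw [e, measure_compl (hFms x) (measure_ne_top P _), measure_univ]
  have hFmono : ∀ {t t' : ℝ}, t ≤ t' →
      P {ω | τ ω ≤ ENNReal.ofReal t} ≤ P {ω | τ ω ≤ ENNReal.ofReal t'} := by
    intro t t' h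
    exact measure_mono fun ω hω => le_trans hω (ENNReal.ofReal_le_ofReal h)
  -- density of "good" points
  have hdense : ∀ x y : ℝ, 0 ≤ x → x < y → ∃ t, x < t ∧ t < y ∧
      (P {ω | τ ω ≤ ENNReal.ofReal t} = 0 ∨ P {ω | τ ω ≤ ENNReal.ofReal t} = 1) := by
    intro x y hx hxy
    by_contra h
    push_neg at h
    rw [ae_iff] at hkey
    have hsub : Set.Ioo x y ⊆ {t | ¬ (P {ω | τ ω ≤ ENNReal.ofReal t} = 0 ∨
        P {ω | τ ω ≤ ENNReal.ofReal t} = 1)} := by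
      intro t ht
      exact not_or.mpr (h t ht.1 ht.2)
    have h0 : (volume.restrict (Set.Ioi (0:ℝ))) (Set.Ioo x y) = 0 :=
      measure_mono_null hsub hkey
    rw [Measure.restrict_apply' measurableSet_Ioi] at h0
    have hIoo : Set.Ioo x y ∩ Set.Ioi 0 = Set.Ioo x y :=
      Set.inter_eq_left.mpr fun t ht => lt_of_le_of_lt hx ht.1
    rw [hIoo, Real.volume_Ioo] at h0
    rw [ENNReal.ofReal_eq_zero] at h0
    linarith
  by_cases hS1 : ∃ t : ℝ, 0 < t ∧ P {ω | τ ω ≤ ENNReal.ofReal t} = 1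
  · -- s = inf of the 1-set
    set S1 := {t : ℝ | 0 < t ∧ P {ω | τ ω ≤ ENNReal.ofReal t} = 1} with hS1def
    set s := sInf S1 with hsdef
    have hbdd : BddBelow S1 := ⟨0, fun t ht => ht.1.le⟩
    have hs0 : 0 ≤ s := le_csInf hS1 fun t ht => ht.1.le
    have hup : ∀ t : ℝ, s < t → P {ω | τ ω ≤ ENNReal.ofReal t} = 1 := by
      intro t hst
      obtain ⟨t1, ht1, h1t⟩ := exists_lt_of_csInf_lt hS1 hst
      exact le_antisymm prob_le_one (ht1.2 ▸ hFmono h1t.le)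
    have hdown : ∀ t : ℝ, 0 < t → t < s → P {ω | τ ω ≤ ENNReal.ofReal t} = 0 := by
      intro t ht hts
      obtain ⟨e, he1, he2, he⟩ := hdense t s ht.le hts
      rcases he with h0 | h1
      · exact le_antisymm (h0 ▸ hFmono he1.le) zero_le
      · exact absurd (csInf_le hbdd ⟨lt_trans ht he1, h1⟩) (not_le.mpr he2)
    -- τ ≤ s a.s.
    have hles : P {ω | τ ω ≤ ENNReal.ofReal s} = 1 := by
      have hiff : {ω | τ ω ≤ ENNReal.ofReal s} =
          ⋂ n : ℕ, {ω | τ ω ≤ ENNReal.ofReal (s + 1/(n+1))} := by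
        ext ω
        simp only [Set.mem_iInter, Set.mem_setOf_eq]
        constructor
        · intro h n
          refine h.trans (ENNReal.ofReal_le_ofReal ?_)
          have : (0:ℝ) < 1/(n+1) := by positivity
          linarith
        · intro h
          have htend : Filter.Tendsto (fun n : ℕ => ENNReal.ofReal (s + 1/(n+1)))
              Filter.atTop (nhds (ENNReal.ofReal s)) := by
            apply ENNReal.tendsto_ofReal
            have := tendsto_one_div_add_atTop_nhds_zero_nat (𝕜 := ℝ)
            have := Filter.Tendsto.const_add s this
            simpa using this
          exact ge_of_tendsto' htend h
      rw [hiff]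
      rw [← prob_compl_eq_zero_iff (MeasurableSet.iInter fun n => hFms _)]
      rw [Set.compl_iInter]
      apply measure_iUnion_null
      intro n
      have h1 : P {ω | τ ω ≤ ENNReal.ofReal (s + 1/(n+1))} = 1 := by
        apply hup
        have : (0:ℝ) < 1/(n+1) := by positivity
        linarith
      rw [measure_compl (hFms _) (measure_ne_top P _), measure_univ, h1, tsub_self]
    -- τ < s has probability zero
    have hlts : P {ω | τ ω < ENNReal.ofReal s} = 0 := by
      rcases eq_or_lt_of_le hs0 with h | h
      · have : {ω | τ ω < ENNReal.ofReal s} = ∅ := by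
          ext ω
          simp [← h]
        rw [this, measure_empty]
      · have hsub : {ω | τ ω < ENNReal.ofReal s} ⊆
            ⋃ n : ℕ, {ω | τ ω ≤ ENNReal.ofReal (s - s/(n+2))} := by
          intro ω hω
          simp only [Set.mem_iUnion, Set.mem_setOf_eq]
          have hωne : τ ω ≠ ⊤ := (lt_of_lt_of_le hω le_top).ne
          simp only [Set.mem_setOf_eq] at hω
          have hr : (τ ω).toReal < s := by
            rwa [ENNReal.lt_ofReal_iff_toReal_lt hωne] at hω
          set rr := (τ ω).toReal with hrr
          have hr0 : 0 ≤ rr := ENNReal.toReal_nonneg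
          obtain ⟨n, hn⟩ := exists_nat_gt (s/(s - rr))
          refine ⟨n, ?_⟩
          rw [ENNReal.le_ofReal_iff_toReal_le hωne]
          · have hpos : (0:ℝ) < s - rr := by linarith
            have hn2 : s/(s - rr) < (n:ℝ) + 2 := by
              have : (n:ℝ) ≤ (n:ℝ) + 2 := by linarith
              linarith
            have : s / ((n:ℝ)+2) < s - rr := by
              rw [div_lt_iff₀ (by positivity)]
              calc s = (s/(s-rr)) * (s - rr) := by field_simp
              _ < ((n:ℝ)+2) * (s - rr) := by
                  apply mul_lt_mul_of_pos_right hn2 hpos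
              _ = (s - rr) * ((n:ℝ)+2) := by ring
            linarith
          · have hd : s/((n:ℝ)+2) ≤ s/2 := by
              apply div_le_div_of_nonneg_left h.le (by norm_num)
              · norm_num
            have : (0:ℝ) < s/2 := by positivity
            linarith
        apply measure_mono_null hsub
        apply measure_iUnion_null
        intro n
        apply hdown
        · have hd : s/((n:ℝ)+2) ≤ s/2 := by
            apply div_le_div_of_nonneg_left h.le (by norm_num)
            · norm_num
          have : (0:ℝ) < s/2 := by positivity
          linarith
        · have : (0:ℝ) < s/((n:ℝ)+2) := by positivity
          linarith
    -- hence τ = s a.s.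
    have heqs : P {ω | τ ω = ENNReal.ofReal s} = 1 := by
      refine le_antisymm prob_le_one ?_
      have hsplit : {ω | τ ω ≤ ENNReal.ofReal s} ⊆
          {ω | τ ω < ENNReal.ofReal s} ∪ {ω | τ ω = ENNReal.ofReal s} := by
        intro ω hω
        exact (show τ ω ≤ ENNReal.ofReal s from hω).lt_or_eq
      calc (1:ℝ≥0∞) = P {ω | τ ω ≤ ENNReal.ofReal s} := hles.symm
      _ ≤ P ({ω | τ ω < ENNReal.ofReal s} ∪ {ω | τ ω = ENNReal.ofReal s}) :=
          measure_mono hsplit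
      _ ≤ P {ω | τ ω < ENNReal.ofReal s} + P {ω | τ ω = ENNReal.ofReal s} :=
          measure_union_le _ _
      _ = P {ω | τ ω = ENNReal.ofReal s} := by rw [hlts, zero_add]
    -- s = tr
    have hae : τ =ᵐ[P] fun _ => ENNReal.ofReal s := by
      rw [Filter.EventuallyEq, ae_iff]
      have hmeq : MeasurableSet {ω | τ ω = ENNReal.ofReal s} :=
        hτ (measurableSet_singleton _)
      have : {ω | ¬ τ ω = ENNReal.ofReal s} = {ω | τ ω = ENNReal.ofReal s}ᶜ := rfl
      rw [this, measure_compl hmeq (measure_ne_top P _),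
        measure_univ, heqs, tsub_self]
    have hstr : ENNReal.ofReal s = ENNReal.ofReal tr := by
      rw [← hint, lintegral_congr_ae hae, lintegral_const, measure_univ, mul_one]
    have : s = tr := by rwa [ENNReal.ofReal_eq_ofReal_iff hs0 htr.le] at hstr
    rwa [this] at heqs
  · -- no value of t with CDF 1 : contradiction with finite mean
    exfalso
    push_neg at hS1
    obtain ⟨e, he1, he2, he⟩ := hdense tr (tr+1) htr.le (by linarith)
    have he0 : P {ω | τ ω ≤ ENNReal.ofReal e} = 0 := by
      rcases he with h | h
      · exact h
      · exact absurd h (hS1 e (lt_trans htr he1))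
    have hge1 : P {ω | ENNReal.ofReal e ≤ τ ω} = 1 := by
      refine le_antisymm prob_le_one ?_
      have : P {ω | ENNReal.ofReal e < τ ω} = 1 := by
        rw [hGF, he0, tsub_zero]
      rw [← this]
      exact measure_mono fun ω (hω : ENNReal.ofReal e < τ ω) => hω.le
    have hmarkov := mul_meas_ge_le_lintegral₀ (μ := P) hτ.aemeasurable (ENNReal.ofReal e)
    rw [hge1, mul_one, hint] at hmarkov
    rw [ENNReal.ofReal_le_ofReal_iff htr.le] at hmarkov
    linarith

/-- Uniqueness of the return-period threshold: if `b ↦ F^u_b(t)` is non-increasing and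
strictly decreasing on `U^u_t = {b : F^u_b(t) ∈ (0,1)}`, `E[τ_{Π⁺(u,C)}] = t_r` with
`τ_{Π⁺(u,C)}` non-deterministic, then no `b > C` can also satisfy `E[τ_{Π⁺(u,b)}] = t_r`. -/
theorem stmt_12 {d : ℕ} {Ω : Type*} [MeasurableSpace Ω]
    (P : Measure Ω) [IsProbabilityMeasure P]
    (V : ℝ≥0 → Ω → EuclideanSpace ℝ (Fin d))
    (u : EuclideanSpace ℝ (Fin d)) (hu : ‖u‖ = 1)
    (hmeas : ∀ b : ℝ, Measurable fun ω => hittingTime V (piPlus u b) ω)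
    (hanti : ∀ t : ℝ, 0 < t →
      Antitone fun b : ℝ => P {ω | hittingTime V (piPlus u b) ω ≤ ENNReal.ofReal t})
    (hstrict : ∀ t : ℝ, 0 < t →
      StrictAntiOn (fun b : ℝ => P {ω | hittingTime V (piPlus u b) ω ≤ ENNReal.ofReal t})
        {b : ℝ | P {ω | hittingTime V (piPlus u b) ω ≤ ENNReal.ofReal t} ∈ Set.Ioo (0 : ℝ≥0∞) 1})
    (tr : ℝ) (htr : 0 < tr) (C : ℝ)
    (hC : ∫⁻ ω, hittingTime V (piPlus u C) ω ∂P = ENNReal.ofReal tr)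
    (hnondet : P {ω | hittingTime V (piPlus u C) ω = ENNReal.ofReal tr} < 1)
    (b : ℝ) (hb : C < b)
    (hbmean : ∫⁻ ω, hittingTime V (piPlus u b) ω ∂P = ENNReal.ofReal tr) :
    False := by
  have hms : ∀ (c : ℝ) (x : ℝ≥0∞), MeasurableSet {ω | hittingTime V (piPlus u c) ω ≤ x} :=
    fun c x => (hmeas c) measurableSet_Iic
  have hGFc : ∀ (c : ℝ) (x : ℝ≥0∞), P {ω | x < hittingTime V (piPlus u c) ω} =
      1 - P {ω | hittingTime V (piPlus u c) ω ≤ x} := by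
    intro c x
    have e : {ω | x < hittingTime V (piPlus u c) ω} =
        {ω | hittingTime V (piPlus u c) ω ≤ x}ᶜ := by ext ω; simp [not_le]
    rw [e, measure_compl (hms c x) (measure_ne_top P _), measure_univ]
  have hGC := layercake_tail P _ (hmeas C) hC
  have hGb := layercake_tail P _ (hmeas b) hbmean
  have hle : ∀ t ∈ Set.Ioi (0:ℝ),
      P {ω | ENNReal.ofReal t < hittingTime V (piPlus u C) ω} ≤
      P {ω | ENNReal.ofReal t < hittingTime V (piPlus u b) ω} := by
    intro t ht
    rw [hGFc C, hGFc b]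
    exact tsub_le_tsub_left (hanti t ht hb.le) 1
  have hGanti : ∀ c : ℝ, Antitone fun t : ℝ =>
      P {ω | ENNReal.ofReal t < hittingTime V (piPlus u c) ω} := by
    intro c t t' h
    exact measure_mono fun ω hω => lt_of_le_of_lt (ENNReal.ofReal_le_ofReal h) hω
  have hGmeas : ∀ c : ℝ, Measurable fun t : ℝ =>
      P {ω | ENNReal.ofReal t < hittingTime V (piPlus u c) ω} :=
    fun c => (hGanti c).measurable
  have hsub : ∫⁻ t in Set.Ioi (0:ℝ),
      (P {ω | ENNReal.ofReal t < hittingTime V (piPlus u b) ω} -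
       P {ω | ENNReal.ofReal t < hittingTime V (piPlus u C) ω}) = 0 := by
    rw [lintegral_sub (hGmeas C) (by rw [hGC]; exact ENNReal.ofReal_ne_top)
      ((ae_restrict_iff' measurableSet_Ioi).2 (Filter.Eventually.of_forall hle))]
    rw [hGb, hGC, tsub_self]
  have haeeq : ∀ᵐ t ∂(volume.restrict (Set.Ioi (0:ℝ))),
      P {ω | ENNReal.ofReal t < hittingTime V (piPlus u b) ω} =
      P {ω | ENNReal.ofReal t < hittingTime V (piPlus u C) ω} := by
    have h0 := (lintegral_eq_zero_iff ((hGmeas b).sub (hGmeas C))).mp hsub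
    filter_upwards [h0,
      (ae_restrict_iff' measurableSet_Ioi).2 (Filter.Eventually.of_forall hle)] with t h1 h2
    have h1' : P {ω | ENNReal.ofReal t < hittingTime V (piPlus u b) ω} -
        P {ω | ENNReal.ofReal t < hittingTime V (piPlus u C) ω} = 0 := h1
    exact le_antisymm (tsub_eq_zero_iff_le.mp h1') h2
  have hkey : ∀ᵐ t ∂(volume.restrict (Set.Ioi (0:ℝ))),
      P {ω | hittingTime V (piPlus u C) ω ≤ ENNReal.ofReal t} = 0 ∨
      P {ω | hittingTime V (piPlus u C) ω ≤ ENNReal.ofReal t} = 1 := by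
    filter_upwards [haeeq, ae_restrict_mem measurableSet_Ioi] with t hGt ht
    by_contra hcon
    push_neg at hcon
    have hFC1 : P {ω | hittingTime V (piPlus u C) ω ≤ ENNReal.ofReal t} < 1 :=
      lt_of_le_of_ne prob_le_one hcon.2
    have hFC0 : 0 < P {ω | hittingTime V (piPlus u C) ω ≤ ENNReal.ofReal t} :=
      pos_iff_ne_zero.mpr hcon.1
    have hFrec : ∀ c : ℝ, P {ω | hittingTime V (piPlus u c) ω ≤ ENNReal.ofReal t} =
        1 - P {ω | ENNReal.ofReal t < hittingTime V (piPlus u c) ω} := by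
      intro c
      rw [hGFc c, ENNReal.sub_sub_cancel ENNReal.one_ne_top prob_le_one]
    have hFb : P {ω | hittingTime V (piPlus u b) ω ≤ ENNReal.ofReal t} =
        P {ω | hittingTime V (piPlus u C) ω ≤ ENNReal.ofReal t} := by
      rw [hFrec b, hFrec C, hGt]
    have hmemC : C ∈ {b : ℝ | P {ω | hittingTime V (piPlus u b) ω ≤ ENNReal.ofReal t} ∈
        Set.Ioo (0 : ℝ≥0∞) 1} := ⟨hFC0, hFC1⟩
    have hmemb : b ∈ {b : ℝ | P {ω | hittingTime V (piPlus u b) ω ≤ ENNReal.ofReal t} ∈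
        Set.Ioo (0 : ℝ≥0∞) 1} := by
      simp only [Set.mem_setOf_eq, hFb]
      exact ⟨hFC0, hFC1⟩
    exact absurd hFb (ne_of_lt (hstrict t ht hmemC hmemb hb))
  have hone := aux_det P _ (hmeas C) tr htr hC hkey
  exact absurd hone (ne_of_lt hnondet)
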